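/- Under the physical-intensity assumption, the vector field G(z) = E[Σ_{t=1}^{N} (φ(h·Λ_t(z;y)) − y_t)·η_t(y)] is κ-strongly monotone on Θ_K: for all z, z̃ ∈ Θ_K, ⟨G(z) − G(z̃), z − z̃⟩ ≥ κ·‖z − z̃‖₂², where κ = e^{-h·b}·b·h²·e^{-B·τ_max}. -/

import Mathlib

open Finset
open scoped BigOperators RealInnerProductSpace

noncomputable section

/-- Real value of a Boolean: `1` if `true`, `0` if `false`. -/
def bval (b : Bool) : ℝ := if b then 1 else 0

/-- The time window of indices `-N'+1, …, N`. -/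
def window (N N' : ℕ) : Finset ℤ := Finset.Icc (-(N' : ℤ) + 1) (N : ℤ)

/-- The probability mass function of the discrete-time Bernoulli process with
true conditional intensities `Λ`. -/
def seqPMF (N N' : ℕ) (h : ℝ) (Λ : ℤ → (ℤ → Bool) → ℝ) (y : ℤ → Bool) : ℝ :=
  ∏ t ∈ window N N',
    ((1 - bval (y t)) * Real.exp (-(h * Λ t y))
      + bval (y t) * (1 - Real.exp (-(h * Λ t y))))

/-- Extension of a window-indexed binary sequence to all of `ℤ` (by `false`). -/
def extSeq (N N' : ℕ) (w : ↥(window N N') → Bool) : ℤ → Bool :=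
  fun i => if hi : i ∈ window N N' then w ⟨i, hi⟩ else false

/-- Expectation with respect to the law of the process. -/
def expect (N N' : ℕ) (h : ℝ) (Λ : ℤ → (ℤ → Bool) → ℝ) (f : (ℤ → Bool) → ℝ) : ℝ :=
  ∑ w : ↥(window N N') → Bool, seqPMF N N' h Λ (extSeq N N' w) * f (extSeq N N' w)

/-- The index set of the kernel parameter: pairs `(i, t)` with `1 ≤ t ≤ N` and
`t - N' ≤ i ≤ t - 1`. -/
def kIdx (N N' : ℕ) : Finset (ℤ × ℤ) :=
  (Finset.Icc (-(N' : ℤ) + 1) (N : ℤ) ×ˢ Finset.Icc 1 (N : ℤ)).filter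
    (fun p => p.2 - (N' : ℤ) ≤ p.1 ∧ p.1 ≤ p.2 - 1)

/-- The space `ℝ^{N·N'}` of kernel parameters, with Euclidean structure. -/
abbrev Param (N N' : ℕ) := EuclideanSpace ℝ ↥(kIdx N N')

/-- Entry `z_{i,t}` of a kernel parameter (zero outside the index set). -/
def zent (N N' : ℕ) (z : Param N N') (i t : ℤ) : ℝ :=
  if hm : (i, t) ∈ kIdx N N' then z ⟨(i, t), hm⟩ else 0

/-- The model intensity `Λ_t(z; y) = μ + ∑_{i = t-N'}^{t-1} y_i z_{i,t}`. -/
def modelIntensity (N N' : ℕ) (μ : ℝ) (z : Param N N') (t : ℤ) (y : ℤ → Bool) : ℝ :=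
  μ + ∑ i ∈ Finset.Icc (t - (N' : ℤ)) (t - 1), bval (y i) * zent N N' z i t

/-- The history vector `η_t(y)`: entry `y_i` at index `(i, t)`, zero elsewhere. -/
def eta (N N' : ℕ) (t : ℤ) (y : ℤ → Bool) : Param N N' :=
  WithLp.toLp 2 (fun p : ↥(kIdx N N') => if p.1.2 = t then bval (y p.1.1) else 0)

/-- The link function `φ(x) = 1 - e^{-x}`. -/
def phi (x : ℝ) : ℝ := 1 - Real.exp (-x)

/-- The per-trajectory VI vector field
`Ĝ(z; y) = ∑_{t=1}^N (φ(h Λ_t(z;y)) - y_t) η_t(y)`. -/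
def Ghat (N N' : ℕ) (h μ : ℝ) (z : Param N N') (y : ℤ → Bool) : Param N N' :=
  ∑ t ∈ Finset.Icc (1 : ℤ) (N : ℤ),
    (phi (h * modelIntensity N N' μ z t y) - bval (y t)) • eta N N' t y

/-- Expectation of a vector-valued statistic with respect to the law of the process. -/
def expectVec {E : Type*} [AddCommMonoid E] [Module ℝ E]
    (N N' : ℕ) (h : ℝ) (Λ : ℤ → (ℤ → Bool) → ℝ) (f : (ℤ → Bool) → E) : E :=
  ∑ w : ↥(window N N') → Bool, seqPMF N N' h Λ (extSeq N N' w) • f (extSeq N N' w)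

namespace AuxSM

/-- indicator sequence of a finite set. -/
def indS (S : Finset ℤ) : ℤ → Bool := fun i => decide (i ∈ S)

@[simp] lemma indS_apply (S : Finset ℤ) (i : ℤ) : indS S i = true ↔ i ∈ S := by
  simp [indS]

/-- One pmf factor. -/
def Ffac (h : ℝ) (Λ : ℤ → (ℤ → Bool) → ℝ) (t : ℤ) (y : ℤ → Bool) : ℝ :=
  (1 - bval (y t)) * Real.exp (-(h * Λ t y)) + bval (y t) * (1 - Real.exp (-(h * Λ t y)))

lemma seqPMF_eq_prod (N N' : ℕ) (h : ℝ) (Λ : ℤ → (ℤ → Bool) → ℝ) (y : ℤ → Bool) :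
    seqPMF N N' h Λ y = ∏ t ∈ window N N', Ffac h Λ t y := rfl

lemma Ffac_congr {h : ℝ} {Λ : ℤ → (ℤ → Bool) → ℝ} {s : ℤ} {y y' : ℤ → Bool}
    (hΛ : Λ s y = Λ s y') (hys : y s = y' s) : Ffac h Λ s y = Ffac h Λ s y' := by
  simp [Ffac, hΛ, hys]

lemma Ffac_false {h : ℝ} {Λ : ℤ → (ℤ → Bool) → ℝ} {s : ℤ} {y : ℤ → Bool}
    (hy : y s = false) : Ffac h Λ s y = Real.exp (-(h * Λ s y)) := by
  simp [Ffac, hy, bval]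

lemma Ffac_true {h : ℝ} {Λ : ℤ → (ℤ → Bool) → ℝ} {s : ℤ} {y : ℤ → Bool}
    (hy : y s = true) : Ffac h Λ s y = 1 - Real.exp (-(h * Λ s y)) := by
  simp [Ffac, hy, bval]

/-- The telescoping lemma: conditional probabilities sum to one. -/
lemma tele (h : ℝ) (Λ : ℤ → (ℤ → Bool) → ℝ)
    (hdep : ∀ (t : ℤ) (y y' : ℤ → Bool), (∀ i < t, y i = y' i) → Λ t y = Λ t y') :
    ∀ (n : ℕ) (c hi : ℤ), c + n = hi → ∀ (S0 : Finset ℤ), (∀ j ∈ S0, j ≤ c) →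
      ∑ S ∈ (Finset.Icc (c + 1) hi).powerset,
        ∏ t ∈ Finset.Icc (c + 1) hi, Ffac h Λ t (indS (S0 ∪ S)) = 1 := by
  intro n
  induction n with
  | zero =>
    intro c hi hc S0 hS0
    have : Finset.Icc (c+1) hi = ∅ := by
      apply Finset.Icc_eq_empty; omega
    simp [this]
  | succ n ih =>
    intro c hi hc S0 hS0
    have hins : Finset.Icc (c+1) hi = insert (c+1) (Finset.Icc (c+2) hi) := by
      ext j; simp only [Finset.mem_Icc, Finset.mem_insert]; omega
    have hnot : (c+1) ∉ Finset.Icc (c+2) hi := by simp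
    rw [hins, Finset.sum_powerset_insert hnot]
    -- congruence for the head factor
    have hhead : ∀ (S : Finset ℤ), (∀ j ∈ S, c + 2 ≤ j) → ∀ (T : Finset ℤ), (∀ j ∈ T, j ≤ c + 1) →
        Ffac h Λ (c+1) (indS (T ∪ S)) = Ffac h Λ (c+1) (indS T) := by
      intro S hS T hT
      apply Ffac_congr
      · apply hdep; intro i hi'
        simp only [indS, decide_eq_decide, Finset.mem_union]
        constructor
        · rintro (h1 | h1); exact h1; exact absurd (hS _ h1) (by omega)
        · intro h1; exact Or.inl h1
      · simp only [indS, decide_eq_decide, Finset.mem_union]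
        constructor
        · rintro (h1 | h1); exact h1; exact absurd (hS _ h1) (by omega)
        · intro h1; exact Or.inl h1
    have htail : ∀ (S : Finset ℤ), S ∈ (Finset.Icc (c+2) hi).powerset → ∀ j ∈ S, c + 2 ≤ j := by
      intro S hS j hj
      have := (Finset.mem_powerset.mp hS) hj
      exact (Finset.mem_Icc.mp this).1
    -- first sum
    have h1 : ∑ S ∈ (Finset.Icc (c+2) hi).powerset,
        ∏ t ∈ insert (c+1) (Finset.Icc (c+2) hi), Ffac h Λ t (indS (S0 ∪ S))
        = Ffac h Λ (c+1) (indS S0) := by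
      calc ∑ S ∈ (Finset.Icc (c+2) hi).powerset,
            ∏ t ∈ insert (c+1) (Finset.Icc (c+2) hi), Ffac h Λ t (indS (S0 ∪ S))
          = ∑ S ∈ (Finset.Icc (c+2) hi).powerset,
            Ffac h Λ (c+1) (indS S0) * ∏ t ∈ Finset.Icc (c+2) hi, Ffac h Λ t (indS (S0 ∪ S)) := by
            apply Finset.sum_congr rfl
            intro S hS
            rw [Finset.prod_insert hnot]
            congr 1
            exact hhead S (htail S hS) S0 (fun j hj => le_trans (hS0 j hj) (by omega))
        _ = Ffac h Λ (c+1) (indS S0) := by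
            rw [← Finset.mul_sum, show (c:ℤ)+2 = c+1+1 from by ring,
              ih (c+1) hi (by omega) S0 (fun j hj => le_trans (hS0 j hj) (by omega)), mul_one]
    -- second sum
    have h2 : ∑ S ∈ (Finset.Icc (c+2) hi).powerset,
        ∏ t ∈ insert (c+1) (Finset.Icc (c+2) hi), Ffac h Λ t (indS (S0 ∪ insert (c+1) S))
        = Ffac h Λ (c+1) (indS (insert (c+1) S0)) := by
      have hre : ∀ S : Finset ℤ, S0 ∪ insert (c+1) S = insert (c+1) S0 ∪ S := by
        intro S; ext j
        simp only [Finset.mem_union, Finset.mem_insert]; tauto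
      calc ∑ S ∈ (Finset.Icc (c+2) hi).powerset,
            ∏ t ∈ insert (c+1) (Finset.Icc (c+2) hi), Ffac h Λ t (indS (S0 ∪ insert (c+1) S))
          = ∑ S ∈ (Finset.Icc (c+2) hi).powerset,
            Ffac h Λ (c+1) (indS (insert (c+1) S0)) *
              ∏ t ∈ Finset.Icc (c+2) hi, Ffac h Λ t (indS (insert (c+1) S0 ∪ S)) := by
            apply Finset.sum_congr rfl
            intro S hS
            rw [hre S, Finset.prod_insert hnot]
            congr 1
            apply hhead S (htail S hS) (insert (c+1) S0)
            intro j hj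
            rcases Finset.mem_insert.mp hj with rfl | hj
            · omega
            · exact le_trans (hS0 j hj) (by omega)
        _ = Ffac h Λ (c+1) (indS (insert (c+1) S0)) := by
            rw [← Finset.mul_sum, show (c:ℤ)+2 = c+1+1 from by ring,
              ih (c+1) hi (by omega) (insert (c+1) S0)
                (fun j hj => by rcases Finset.mem_insert.mp hj with rfl | hj; omega;
                                exact le_trans (hS0 j hj) (by omega)), mul_one]
    rw [h1, h2]
    -- now the two head factors sum to 1
    have hΛeq : Λ (c+1) (indS S0) = Λ (c+1) (indS (insert (c+1) S0)) := by
      apply hdep; intro i hi'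
      simp only [indS, decide_eq_decide, Finset.mem_insert]
      constructor
      · exact Or.inr
      · rintro (rfl | h1); omega; exact h1
    have hv0 : indS S0 (c+1) = false := by
      simp only [indS, decide_eq_false_iff_not]
      intro hmem; exact absurd (hS0 _ hmem) (by omega)
    have hv1 : indS (insert (c+1) S0) (c+1) = true := by
      simp [indS]
    rw [Ffac_false hv0, Ffac_true hv1, ← hΛeq]
    ring

end AuxSM

namespace AuxSM2
open AuxSM

/-- Splitting a powerset sum along a disjoint union. -/
lemma sum_powerset_union (u v : Finset ℤ) (huv : Disjoint u v) (f : Finset ℤ → ℝ) :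
    ∑ S ∈ (u ∪ v).powerset, f S = ∑ A ∈ u.powerset, ∑ B ∈ v.powerset, f (A ∪ B) := by
  rw [← Finset.sum_product']
  apply Finset.sum_nbij' (i := fun S => (S ∩ u, S ∩ v)) (j := fun p => p.1 ∪ p.2)
  · intro S hS
    simp only [Finset.mem_product, Finset.mem_powerset]
    exact ⟨Finset.inter_subset_right, Finset.inter_subset_right⟩
  · intro p hp
    simp only [Finset.mem_product, Finset.mem_powerset] at hp
    exact Finset.mem_powerset.mpr (Finset.union_subset_union hp.1 hp.2)
  · intro S hS
    have h1 : S ⊆ u ∪ v := Finset.mem_powerset.mp hS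
    simp only
    rw [← Finset.inter_union_distrib_left, Finset.inter_eq_left.mpr h1]
  · intro p hp
    simp only [Finset.mem_product, Finset.mem_powerset] at hp
    have h1 : (p.1 ∪ p.2) ∩ u = p.1 := by
      rw [Finset.union_inter_distrib_right, Finset.inter_eq_left.mpr hp.1,
        Finset.disjoint_iff_inter_eq_empty.mp (Finset.disjoint_of_subset_left hp.2 huv.symm),
        Finset.union_empty]
    have h2 : (p.1 ∪ p.2) ∩ v = p.2 := by
      rw [Finset.union_inter_distrib_right, Finset.inter_eq_left.mpr hp.2,
        Finset.disjoint_iff_inter_eq_empty.mp (Finset.disjoint_of_subset_left hp.1 huv),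
        Finset.empty_union]
    simp [h1, h2]
  · intro S hS
    have h1 : S ⊆ u ∪ v := Finset.mem_powerset.mp hS
    simp only
    rw [← Finset.inter_union_distrib_left, Finset.inter_eq_left.mpr h1]

/-- Re-indexing the sum over binary sequences by subsets of the window. -/
lemma sum_ext (N N' : ℕ) (g : (ℤ → Bool) → ℝ) :
    ∑ w : ↥(window N N') → Bool, g (extSeq N N' w)
      = ∑ S ∈ (window N N').powerset, g (indS S) := by
  apply Finset.sum_nbij'
    (i := fun w => (window N N').filter (fun i => extSeq N N' w i = true))
    (j := fun S => fun p => decide (p.val ∈ S))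
  · intro w _; exact Finset.mem_powerset.mpr (Finset.filter_subset _ _)
  · intro S _; exact Finset.mem_univ _
  · intro w _
    funext p
    have hp : extSeq N N' w p.val = w p := by simp [extSeq, p.prop]
    simp [Finset.mem_filter, p.prop, hp]
  · intro S hS
    have hsub := Finset.mem_powerset.mp hS
    ext j
    simp only [Finset.mem_filter, extSeq]
    constructor
    · rintro ⟨hj, h2⟩
      rw [dif_pos hj] at h2
      simpa using h2
    · intro hj
      refine ⟨hsub hj, ?_⟩
      rw [dif_pos (hsub hj)]
      simpa using hj
  · intro w _
    congr 1
    funext i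
    by_cases hi : i ∈ window N N'
    · simp only [extSeq, dif_pos hi, indS, Finset.mem_filter]
      simp [extSeq, dif_pos hi, hi]
    · simp only [extSeq, dif_neg hi, indS]
      simp [Finset.mem_filter, hi]

/-- Quantitative monotonicity of φ(h·). -/
lemma phi_quant {h B : ℝ} (hh : 0 < h) (a a' : ℝ) (ha : a ≤ B) (ha' : a' ≤ B) :
    ((1 - Real.exp (-(h * a))) - (1 - Real.exp (-(h * a')))) * (a - a')
      ≥ h * Real.exp (-(h * B)) * (a - a') ^ 2 := by
  -- wlog via a helper for the ordered case
  have key : ∀ x x' : ℝ, x' ≤ x → x ≤ B →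
      (Real.exp (-(h * x')) - Real.exp (-(h * x))) * (x - x')
        ≥ h * Real.exp (-(h * B)) * (x - x') ^ 2 := by
    intro x x' hle hxB
    have hd : 0 ≤ x - x' := by linarith
    have h1 : Real.exp (-(h * x')) - Real.exp (-(h * x))
        = Real.exp (-(h * x)) * (Real.exp (h * (x - x')) - 1) := by
      rw [mul_sub, ← Real.exp_add, mul_one]; ring_nf
    have h2 : Real.exp (h * (x - x')) - 1 ≥ h * (x - x') := by
      have := Real.add_one_le_exp (h * (x - x')); linarith
    have h3 : Real.exp (-(h * B)) ≤ Real.exp (-(h * x)) :=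
      Real.exp_le_exp.mpr (by nlinarith)
    have h4 : (0:ℝ) < Real.exp (-(h * x)) := Real.exp_pos _
    have h5 : (0:ℝ) < Real.exp (-(h * B)) := Real.exp_pos _
    have hmd : h * (x - x') ≥ 0 := by positivity
    calc (Real.exp (-(h * x')) - Real.exp (-(h * x))) * (x - x')
        = Real.exp (-(h * x)) * (Real.exp (h * (x - x')) - 1) * (x - x') := by rw [h1]
      _ ≥ Real.exp (-(h * B)) * (h * (x - x')) * (x - x') := by
          apply mul_le_mul_of_nonneg_right _ hd
          calc Real.exp (-(h*B)) * (h * (x-x')) ≤ Real.exp (-(h*x)) * (h * (x-x')) := by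
                apply mul_le_mul_of_nonneg_right h3 hmd
            _ ≤ Real.exp (-(h*x)) * (Real.exp (h * (x - x')) - 1) := by
                apply mul_le_mul_of_nonneg_left h2 h4.le
      _ = h * Real.exp (-(h * B)) * (x - x') ^ 2 := by ring
  rcases le_total a' a with hle | hle
  · have := key a a' hle ha
    calc ((1 - Real.exp (-(h * a))) - (1 - Real.exp (-(h * a')))) * (a - a')
        = (Real.exp (-(h * a')) - Real.exp (-(h * a))) * (a - a') := by ring
      _ ≥ h * Real.exp (-(h * B)) * (a - a') ^ 2 := this
  · have := key a' a hle ha'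
    calc ((1 - Real.exp (-(h * a))) - (1 - Real.exp (-(h * a')))) * (a - a')
        = (Real.exp (-(h * a)) - Real.exp (-(h * a'))) * (a' - a) := by ring
      _ ≥ h * Real.exp (-(h * B)) * (a' - a) ^ 2 := this
      _ = h * Real.exp (-(h * B)) * (a - a') ^ 2 := by ring

/-- `1 - e^{-x} ≥ x e^{-x}` for `x ≥ 0`. -/
lemma one_sub_exp_ge {x : ℝ} (hx : 0 ≤ x) : 1 - Real.exp (-x) ≥ x * Real.exp (-x) := by
  have h1 := Real.add_one_le_exp x
  have h2 : (0:ℝ) < Real.exp (-x) := Real.exp_pos _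
  have h3 : Real.exp x * Real.exp (-x) = 1 := by
    rw [← Real.exp_add]; simp
  nlinarith [mul_le_mul_of_nonneg_right h1 h2.le]

end AuxSM2

namespace AuxSM3
open AuxSM AuxSM2

lemma mem_kIdx (N N' : ℕ) (q : ℤ × ℤ) :
    q ∈ kIdx N N' ↔ 1 ≤ q.2 ∧ q.2 ≤ (N : ℤ) ∧ q.2 - (N' : ℤ) ≤ q.1 ∧ q.1 ≤ q.2 - 1 := by
  simp only [kIdx, Finset.mem_filter, Finset.mem_product, Finset.mem_Icc]
  omega

lemma kIdx_filter_eq (N N' : ℕ) {t : ℤ} (ht1 : 1 ≤ t) (ht2 : t ≤ (N : ℤ)) :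
    (kIdx N N').filter (fun q => q.2 = t)
      = (Finset.Icc (t - (N' : ℤ)) (t - 1)).image (fun i => (i, t)) := by
  ext q
  simp only [Finset.mem_filter, Finset.mem_image, Finset.mem_Icc, mem_kIdx]
  constructor
  · rintro ⟨⟨h1, h2, h3, h4⟩, h5⟩
    exact ⟨q.1, ⟨by omega, by omega⟩, by rw [← h5]⟩
  · rintro ⟨a, ⟨ha1, ha2⟩, rfl⟩
    exact ⟨⟨by omega, by omega, by omega, by omega⟩, rfl⟩

lemma inner_eq_sum (N N' : ℕ) (u v : Param N N') :
    ⟪u, v⟫ = ∑ q ∈ kIdx N N', zent N N' u q.1 q.2 * zent N N' v q.1 q.2 := by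
  rw [PiLp.inner_apply]
  rw [← Finset.sum_attach (kIdx N N')
    (fun q => zent N N' u q.1 q.2 * zent N N' v q.1 q.2)]
  apply Finset.sum_congr rfl
  intro p _
  obtain ⟨⟨i, t⟩, hm⟩ := p
  simp only [zent, dif_pos hm, RCLike.inner_apply, conj_trivial]
  ring

lemma eta_inner (N N' : ℕ) {t : ℤ} (ht1 : 1 ≤ t) (ht2 : t ≤ (N : ℤ))
    (y : ℤ → Bool) (x : Param N N') :
    ⟪eta N N' t y, x⟫
      = ∑ i ∈ Finset.Icc (t - (N' : ℤ)) (t - 1), bval (y i) * zent N N' x i t := by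
  rw [inner_eq_sum]
  have hz : ∀ q ∈ kIdx N N', zent N N' (eta N N' t y) q.1 q.2
      = if q.2 = t then bval (y q.1) else 0 := by
    intro q hq
    have hm : (q.1, q.2) ∈ kIdx N N' := by rw [Prod.mk.eta]; exact hq
    simp [zent, hm, eta]
  rw [Finset.sum_congr rfl (fun q hq => by rw [hz q hq])]
  rw [← Finset.sum_filter_of_ne (p := fun q => q.2 = t)
    (by intro q hq hne; by_contra hc; exact hne (by simp [hc] at *))]
  rw [kIdx_filter_eq N N' ht1 ht2, Finset.sum_image (by intro a _ b _ hab; simpa using hab)]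
  apply Finset.sum_congr rfl
  intro i _
  simp

lemma norm_sq_eq (N N' : ℕ) (x : Param N N') :
    ‖x‖ ^ 2 = ∑ t ∈ Finset.Icc (1 : ℤ) (N : ℤ),
      ∑ i ∈ Finset.Icc (t - (N' : ℤ)) (t - 1), (zent N N' x i t) ^ 2 := by
  rw [← real_inner_self_eq_norm_sq, inner_eq_sum]
  rw [← Finset.sum_fiberwise_of_maps_to (g := fun q : ℤ × ℤ => q.2) (t := Finset.Icc 1 (N : ℤ))
    (fun q hq => by rw [mem_kIdx] at hq; exact Finset.mem_Icc.mpr ⟨hq.1, hq.2.1⟩)]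
  apply Finset.sum_congr rfl
  intro t ht
  have ht' := Finset.mem_Icc.mp ht
  rw [kIdx_filter_eq N N' ht'.1 ht'.2, Finset.sum_image (by intro a _ b _ hab; simpa using hab)]
  apply Finset.sum_congr rfl
  intro i _
  simp only [sq]

lemma zent_sub (N N' : ℕ) (z z' : Param N N') (i t : ℤ) :
    zent N N' (z - z') i t = zent N N' z i t - zent N N' z' i t := by
  unfold zent
  by_cases hm : (i, t) ∈ kIdx N N'
  · simp only [dif_pos hm]
    rfl
  · simp [dif_neg hm]

lemma model_sub (N N' : ℕ) (μ : ℝ) (z z' : Param N N') (t : ℤ) (y : ℤ → Bool) :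
    modelIntensity N N' μ z t y - modelIntensity N N' μ z' t y
      = ∑ i ∈ Finset.Icc (t - (N' : ℤ)) (t - 1), bval (y i) * zent N N' (z - z') i t := by
  simp only [modelIntensity]
  rw [add_sub_add_left_eq_sub, ← Finset.sum_sub_distrib]
  apply Finset.sum_congr rfl
  intro i _
  rw [zent_sub]
  ring

end AuxSM3

namespace AuxSM4
open AuxSM AuxSM2 AuxSM3

variable {N N' : ℕ} {h : ℝ} {Λ : ℤ → (ℤ → Bool) → ℝ} {b B : ℝ}

/-- All pmf factors of indicator sequences of subsets of the window are positive,
and the true intensities are within `[b,B]` on them. -/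
lemma Fpos_all (hh : 0 < h) (hb : 0 < b)
    (hdep' : ∀ (t : ℤ) (y y' : ℤ → Bool), (∀ i < t, y i = y' i) → Λ t y = Λ t y')
    (hstar : ∀ t ∈ window N N', ∀ y : ℤ → Bool,
      0 < seqPMF N N' h Λ y → b ≤ Λ t y ∧ Λ t y ≤ B) :
    ∀ S ⊆ window N N', ∀ s ∈ window N N', 0 < Ffac h Λ s (indS S) := by
  have key : ∀ (n : ℕ) (S : Finset ℤ), S ⊆ window N N' →
      ∀ s ∈ window N N', s < (-(N' : ℤ) + 1) + n → 0 < Ffac h Λ s (indS S) := by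
    intro n
    induction n with
    | zero =>
      intro S hS s hsw hlt
      have := (Finset.mem_Icc.mp hsw).1
      omega
    | succ n ih =>
      intro S hS s hsw hlt
      by_cases hcase : s < (-(N' : ℤ) + 1) + n
      · exact ih S hS s hsw hcase
      have hseq : s = (-(N' : ℤ) + 1) + n := by push_cast at hlt ⊢; omega
      -- truncated sequence
      set S' : Finset ℤ := S.filter (fun j => j < s) with hS'
      have hagree : ∀ j, j < s → indS S' j = indS S j := by
        intro j hj
        simp only [indS, hS', Finset.mem_filter, decide_eq_decide]
        tauto
      have hcongrF : ∀ u, u < s → Ffac h Λ u (indS S') = Ffac h Λ u (indS S) := by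
        intro u hu
        exact Ffac_congr (hdep' u _ _ (fun i hi => hagree i (by omega))) (hagree u hu)
      have hpmf : 0 < seqPMF N N' h Λ (indS S') := by
        rw [seqPMF_eq_prod]
        apply Finset.prod_pos
        intro u huw
        by_cases hu : u < s
        · rw [hcongrF u hu]; exact ih S hS u huw (by omega)
        · have hfalse : indS S' u = false := by
            simp only [indS, hS', Finset.mem_filter, decide_eq_false_iff_not]
            intro hmem; exact hu hmem.2
          rw [Ffac_false hfalse]; exact Real.exp_pos _
      have hΛb := hstar s hsw (indS S') hpmf
      have hΛeq : Λ s (indS S') = Λ s (indS S) := hdep' s _ _ (fun i hi => hagree i hi)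
      cases hv : indS S s with
      | false => rw [Ffac_false hv]; exact Real.exp_pos _
      | true =>
        rw [Ffac_true hv]
        have hΛpos : 0 < Λ s (indS S) := by rw [← hΛeq]; linarith [hΛb.1]
        have : Real.exp (-(h * Λ s (indS S))) < 1 :=
          Real.exp_lt_one_iff.mpr (by nlinarith)
        linarith
  intro S hS s hsw
  refine key (N + N') S hS s hsw ?_
  have := (Finset.mem_Icc.mp hsw).2
  push_cast
  omega

lemma pmf_pos (hh : 0 < h) (hb : 0 < b)
    (hdep' : ∀ (t : ℤ) (y y' : ℤ → Bool), (∀ i < t, y i = y' i) → Λ t y = Λ t y')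
    (hstar : ∀ t ∈ window N N', ∀ y : ℤ → Bool,
      0 < seqPMF N N' h Λ y → b ≤ Λ t y ∧ Λ t y ≤ B) :
    ∀ S ⊆ window N N', 0 < seqPMF N N' h Λ (indS S) := by
  intro S hS
  rw [seqPMF_eq_prod]
  exact Finset.prod_pos (fun s hs => Fpos_all hh hb hdep' hstar S hS s hs)

end AuxSM4

namespace AuxSM5
open AuxSM AuxSM2 AuxSM3 AuxSM4

lemma Pbound {N N' : ℕ} {h : ℝ} {Λ : ℤ → (ℤ → Bool) → ℝ} {b B : ℝ}
    (hN' : 1 ≤ N') (hh : 0 < h) (hb : 0 < b) (hbB : b ≤ B)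
    (hdep' : ∀ (t : ℤ) (y y' : ℤ → Bool), (∀ i < t, y i = y' i) → Λ t y = Λ t y')
    (hFpos : ∀ S ⊆ window N N', ∀ s ∈ window N N', 0 < Ffac h Λ s (indS S))
    (hΛrange : ∀ S ⊆ window N N', ∀ s ∈ window N N',
      b ≤ Λ s (indS S) ∧ Λ s (indS S) ≤ B)
    (t i : ℤ) (ht1 : 1 ≤ t) (ht2 : t ≤ (N : ℤ)) (hi1 : t - N' ≤ i) (hi2 : i ≤ t - 1) :
    ∑ S ∈ (window N N').powerset, seqPMF N N' h Λ (indS S) *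
        (if S ∩ Finset.Icc (t - (N' : ℤ)) (t - 1) = {i} then (1 : ℝ) else 0)
      ≥ h * b * Real.exp (-(h * b)) * Real.exp (-(h * B)) ^ (N' - 1) := by
  classical
  set lo : ℤ := -(N' : ℤ) + 1 with hlo
  set low : Finset ℤ := Finset.Icc lo (t - N' - 1) with hlowdef
  set midt : Finset ℤ := Finset.Icc (t - (N' : ℤ)) (t - 1) with hmiddef
  set high : Finset ℤ := Finset.Icc t (N : ℤ) with hhighdef
  have hsplit : window N N' = (low ∪ midt) ∪ high := by
    ext j
    simp only [window, Finset.mem_union, Finset.mem_Icc, hlowdef, hmiddef, hhighdef, hlo]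
    omega
  have hd1 : Disjoint low midt := by
    rw [Finset.disjoint_left]; intro a ha hb'
    simp only [hlowdef, hmiddef, Finset.mem_Icc] at ha hb'; omega
  have hd2 : Disjoint (low ∪ midt) high := by
    rw [Finset.disjoint_left]; intro a ha hb'
    simp only [hlowdef, hmiddef, hhighdef, Finset.mem_union, Finset.mem_Icc] at ha hb'
    omega
  have hlowsub : low ⊆ window N N' := by
    intro j hj
    simp only [hlowdef, window, Finset.mem_Icc, hlo] at *
    omega
  have hmidsub : midt ⊆ window N N' := by
    intro j hj
    simp only [hmiddef, window, Finset.mem_Icc, hlo] at *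
    omega
  have himid : i ∈ midt := by
    simp only [hmiddef, Finset.mem_Icc]; omega
  rw [hsplit, sum_powerset_union _ _ hd2, sum_powerset_union _ _ hd1]
  -- collapse the middle-block sum
  have hmain : ∀ S0 ∈ low.powerset,
      ∑ S1 ∈ midt.powerset, ∑ C ∈ high.powerset,
        seqPMF N N' h Λ (indS ((S0 ∪ S1) ∪ C)) *
          (if ((S0 ∪ S1) ∪ C) ∩ midt = {i} then (1 : ℝ) else 0)
      = ∑ C ∈ high.powerset, seqPMF N N' h Λ (indS ((S0 ∪ {i}) ∪ C)) := by
    intro S0 hS0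
    have hS0' := Finset.mem_powerset.mp hS0
    have hcond : ∀ S1 ∈ midt.powerset, ∀ C ∈ high.powerset,
        ((((S0 ∪ S1) ∪ C) ∩ midt = {i}) ↔ S1 = {i}) := by
      intro S1 hS1 C hC
      have hS1' := Finset.mem_powerset.mp hS1
      have hC' := Finset.mem_powerset.mp hC
      have hint : ((S0 ∪ S1) ∪ C) ∩ midt = S1 := by
        ext j
        simp only [Finset.mem_inter, Finset.mem_union]
        constructor
        · rintro ⟨(hj | hj) | hj, hjm⟩
          · exact absurd hjm (Finset.disjoint_left.mp hd1 (hS0' hj))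
          · exact hj
          · exact absurd (hC' hj) (Finset.disjoint_left.mp hd2 (Finset.mem_union_right low hjm))
        · intro hj; exact ⟨Or.inl (Or.inr hj), hS1' hj⟩
      rw [hint]
    calc ∑ S1 ∈ midt.powerset, ∑ C ∈ high.powerset,
          seqPMF N N' h Λ (indS ((S0 ∪ S1) ∪ C)) *
            (if ((S0 ∪ S1) ∪ C) ∩ midt = {i} then (1 : ℝ) else 0)
        = ∑ S1 ∈ midt.powerset, (if S1 = {i} then
            ∑ C ∈ high.powerset, seqPMF N N' h Λ (indS ((S0 ∪ S1) ∪ C)) else 0) := by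
          apply Finset.sum_congr rfl
          intro S1 hS1
          by_cases hc : S1 = {i}
          · rw [if_pos hc]
            apply Finset.sum_congr rfl
            intro C hC
            rw [if_pos ((hcond S1 hS1 C hC).mpr hc), mul_one]
          · rw [if_neg hc, Finset.sum_eq_zero]
            intro C hC
            rw [if_neg (fun hcc => hc ((hcond S1 hS1 C hC).mp hcc)), mul_zero]
      _ = ∑ C ∈ high.powerset, seqPMF N N' h Λ (indS ((S0 ∪ {i}) ∪ C)) := by
          rw [Finset.sum_ite_eq' midt.powerset ({i} : Finset ℤ)
            (fun S1 => ∑ C ∈ high.powerset, seqPMF N N' h Λ (indS ((S0 ∪ S1) ∪ C)))]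
          rw [if_pos (Finset.mem_powerset.mpr (Finset.singleton_subset_iff.mpr himid))]
  -- telescope the high-block sum
  have hCsum : ∀ S0 ∈ low.powerset,
      ∑ C ∈ high.powerset, seqPMF N N' h Λ (indS ((S0 ∪ {i}) ∪ C))
        = ∏ s ∈ low ∪ midt, Ffac h Λ s (indS (S0 ∪ {i})) := by
    intro S0 hS0
    have hS0' := Finset.mem_powerset.mp hS0
    have hD : ∀ j ∈ S0 ∪ {i}, j ≤ t - 1 := by
      intro j hj
      rcases Finset.mem_union.mp hj with hj | hj
      · have := Finset.mem_Icc.mp (hS0' hj); omega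
      · have := Finset.mem_singleton.mp hj; omega
    have hindagree : ∀ C ⊆ high, ∀ j, j < t →
        indS ((S0 ∪ {i}) ∪ C) j = indS (S0 ∪ {i}) j := by
      intro C hC j hj
      simp only [indS, decide_eq_decide, Finset.mem_union]
      constructor
      · rintro (h1 | h1)
        · exact h1
        · exact absurd (Finset.mem_Icc.mp (hC h1)).1 (by omega)
      · exact Or.inl
    calc ∑ C ∈ high.powerset, seqPMF N N' h Λ (indS ((S0 ∪ {i}) ∪ C))
        = ∑ C ∈ high.powerset, (∏ s ∈ low ∪ midt, Ffac h Λ s (indS (S0 ∪ {i})))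
            * ∏ s ∈ high, Ffac h Λ s (indS ((S0 ∪ {i}) ∪ C)) := by
          apply Finset.sum_congr rfl
          intro C hC
          have hC' := Finset.mem_powerset.mp hC
          rw [seqPMF_eq_prod, hsplit, Finset.prod_union hd2]
          congr 1
          apply Finset.prod_congr rfl
          intro s hs
          have hst : s < t := by
            rcases Finset.mem_union.mp hs with hs | hs
            · have := Finset.mem_Icc.mp hs; omega
            · have := Finset.mem_Icc.mp hs; omega
          exact Ffac_congr (hdep' s _ _ (fun j hj => hindagree C hC' j (by omega)))
            (hindagree C hC' s hst)
      _ = ∏ s ∈ low ∪ midt, Ffac h Λ s (indS (S0 ∪ {i})) := by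
          have hn : (t - 1) + (((N : ℤ) - t + 1).toNat : ℤ) = (N : ℤ) := by
            rw [Int.toNat_of_nonneg (by omega)]; ring
          have htele := tele h Λ hdep' ((N : ℤ) - t + 1).toNat (t - 1) (N : ℤ) hn
            (S0 ∪ {i}) hD
          have hIcc : Finset.Icc (t - 1 + 1) (N : ℤ) = high := by
            rw [hhighdef]; congr 1; ring
          rw [hIcc] at htele
          rw [← Finset.mul_sum, htele, mul_one]
  -- lower bound for the middle product
  have hmidprod : ∀ S0 ∈ low.powerset,
      h * b * Real.exp (-(h * b)) * Real.exp (-(h * B)) ^ (N' - 1)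
        ≤ ∏ s ∈ midt, Ffac h Λ s (indS (S0 ∪ {i})) := by
    intro S0 hS0
    have hS0' := Finset.mem_powerset.mp hS0
    have hDsub : S0 ∪ {i} ⊆ window N N' := by
      intro j hj
      rcases Finset.mem_union.mp hj with hj | hj
      · exact hlowsub (hS0' hj)
      · rw [Finset.mem_singleton.mp hj]; exact hmidsub himid
    have hrange := fun s (hs : s ∈ midt) => hΛrange (S0 ∪ {i}) hDsub s (hmidsub hs)
    rw [← Finset.mul_prod_erase midt _ himid]
    have hvi : indS (S0 ∪ {i}) i = true := by simp [indS]
    have hf1 : h * b * Real.exp (-(h * b)) ≤ Ffac h Λ i (indS (S0 ∪ {i})) := by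
      rw [Ffac_true hvi]
      have h1 : Real.exp (-(h * Λ i (indS (S0 ∪ {i})))) ≤ Real.exp (-(h * b)) :=
        Real.exp_le_exp.mpr (by nlinarith [(hrange i himid).1])
      have h2 := one_sub_exp_ge (x := h * b) (by positivity)
      nlinarith
    have hf2 : ∀ s ∈ midt.erase i, Real.exp (-(h * B)) ≤ Ffac h Λ s (indS (S0 ∪ {i})) := by
      intro s hs
      have hsm := Finset.mem_of_mem_erase hs
      have hsne := Finset.ne_of_mem_erase hs
      have hvs : indS (S0 ∪ {i}) s = false := by
        simp only [indS, decide_eq_false_iff_not, Finset.mem_union, Finset.mem_singleton]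
        rintro (hj | hj)
        · have hx1 := Finset.mem_Icc.mp (hS0' hj)
          have hx2 := Finset.mem_Icc.mp hsm
          omega
        · exact hsne hj
      rw [Ffac_false hvs]
      exact Real.exp_le_exp.mpr (by nlinarith [(hrange s hsm).2])
    have hcard : (midt.erase i).card = N' - 1 := by
      rw [Finset.card_erase_of_mem himid, hmiddef, Int.card_Icc]
      omega
    have hprod2 : Real.exp (-(h * B)) ^ (N' - 1)
        ≤ ∏ s ∈ midt.erase i, Ffac h Λ s (indS (S0 ∪ {i})) := by
      calc Real.exp (-(h * B)) ^ (N' - 1)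
          = ∏ _s ∈ midt.erase i, Real.exp (-(h * B)) := by
            rw [Finset.prod_const, hcard]
        _ ≤ ∏ s ∈ midt.erase i, Ffac h Λ s (indS (S0 ∪ {i})) :=
            Finset.prod_le_prod (fun s _ => (Real.exp_pos _).le) hf2
    have e1 : (0 : ℝ) ≤ h * b * Real.exp (-(h * b)) := by positivity
    have e2 : (0 : ℝ) ≤ Real.exp (-(h * B)) ^ (N' - 1) := by positivity
    exact mul_le_mul hf1 hprod2 e2 (le_trans e1 hf1)
  -- assemble
  have hstep : ∑ S0 ∈ low.powerset, ∑ S1 ∈ midt.powerset, ∑ C ∈ high.powerset,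
        seqPMF N N' h Λ (indS ((S0 ∪ S1) ∪ C)) *
          (if ((S0 ∪ S1) ∪ C) ∩ midt = {i} then (1 : ℝ) else 0)
      = ∑ S0 ∈ low.powerset,
          (∏ s ∈ low, Ffac h Λ s (indS S0)) * ∏ s ∈ midt, Ffac h Λ s (indS (S0 ∪ {i})) := by
    apply Finset.sum_congr rfl
    intro S0 hS0
    have hS0' := Finset.mem_powerset.mp hS0
    rw [hmain S0 hS0, hCsum S0 hS0, Finset.prod_union hd1]
    congr 1
    apply Finset.prod_congr rfl
    intro s hs
    have hsl := Finset.mem_Icc.mp hs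
    have hag : ∀ j, j ≤ s → indS (S0 ∪ {i}) j = indS S0 j := by
      intro j hj
      simp only [indS, decide_eq_decide, Finset.mem_union, Finset.mem_singleton]
      constructor
      · rintro (h1 | h1)
        · exact h1
        · omega
      · exact Or.inl
    exact Ffac_congr (hdep' s _ _ (fun j hj => hag j (by omega))) (hag s le_rfl)
  rw [hstep]
  have htele_low : ∑ S0 ∈ low.powerset, ∏ s ∈ low, Ffac h Λ s (indS S0) = 1 := by
    have hn : (lo - 1) + ((t - 1).toNat : ℤ) = t - N' - 1 := by
      rw [Int.toNat_of_nonneg (by omega)]; simp only [hlo]; ring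
    have htele := tele h Λ hdep' (t - 1).toNat (lo - 1) (t - N' - 1) hn ∅ (by simp)
    have hIcc : Finset.Icc (lo - 1 + 1) (t - N' - 1) = low := by
      rw [hlowdef]; congr 1; ring
    rw [hIcc] at htele
    calc ∑ S0 ∈ low.powerset, ∏ s ∈ low, Ffac h Λ s (indS S0)
        = ∑ S0 ∈ low.powerset, ∏ s ∈ low, Ffac h Λ s (indS (∅ ∪ S0)) := by
          apply Finset.sum_congr rfl
          intro S0 _
          rw [Finset.empty_union]
      _ = 1 := htele
  rw [ge_iff_le]
  calc h * b * Real.exp (-(h * b)) * Real.exp (-(h * B)) ^ (N' - 1)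
      = (h * b * Real.exp (-(h * b)) * Real.exp (-(h * B)) ^ (N' - 1)) *
          ∑ S0 ∈ low.powerset, ∏ s ∈ low, Ffac h Λ s (indS S0) := by
        rw [htele_low, mul_one]
    _ = ∑ S0 ∈ low.powerset, (∏ s ∈ low, Ffac h Λ s (indS S0)) *
          (h * b * Real.exp (-(h * b)) * Real.exp (-(h * B)) ^ (N' - 1)) := by
        rw [Finset.mul_sum]
        apply Finset.sum_congr rfl
        intro S0 _
        ring
    _ ≤ ∑ S0 ∈ low.powerset,
          (∏ s ∈ low, Ffac h Λ s (indS S0)) * ∏ s ∈ midt, Ffac h Λ s (indS (S0 ∪ {i})) := by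
        apply Finset.sum_le_sum
        intro S0 hS0
        have hS0' := Finset.mem_powerset.mp hS0
        have hpos : (0 : ℝ) ≤ ∏ s ∈ low, Ffac h Λ s (indS S0) :=
          Finset.prod_nonneg (fun s hs =>
            (hFpos S0 (fun j hj => hlowsub (hS0' hj)) s (hlowsub hs)).le)
        exact mul_le_mul_of_nonneg_left (hmidprod S0 hS0) hpos

end AuxSM5


set_option maxHeartbeats 2000000 in
open AuxSM AuxSM2 AuxSM3 AuxSM4 AuxSM5 in
/-- strong monotonicity of the VI vector field. -/
theorem G_strongly_monotone
    (N N' : ℕ) (hN : 1 ≤ N) (hN' : 1 ≤ N') (h : ℝ) (hh : 0 < h)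
    (Λ : ℤ → (ℤ → Bool) → ℝ)
    (hdep : ∀ (t : ℤ) (y y' : ℤ → Bool),
      (∀ i ∈ window N N', i < t → y i = y' i) → Λ t y = Λ t y')
    (μ : ℝ) (hμ : 0 < μ)
    (b B : ℝ) (hb : 0 < b) (hbB : b ≤ B)
    (hstar : ∀ t ∈ window N N', ∀ y : ℤ → Bool,
      0 < seqPMF N N' h Λ y → b ≤ Λ t y ∧ Λ t y ≤ B)
    (ΘK : Set (Param N N')) (hne : ΘK.Nonempty)
    (hcomp : IsCompact ΘK) (hconv : Convex ℝ ΘK)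
    (zstar : Param N N') (hzs : zstar ∈ ΘK)
    (htrue : ∀ t ∈ Finset.Icc (1 : ℤ) (N : ℤ), ∀ y : ℤ → Bool,
      Λ t y = modelIntensity N N' μ zstar t y)
    (hphys : ∀ z ∈ ΘK, ∀ t ∈ Finset.Icc (1 : ℤ) (N : ℤ), ∀ y : ℤ → Bool,
      b ≤ modelIntensity N N' μ z t y ∧ modelIntensity N N' μ z t y ≤ B) :
    ∀ z ∈ ΘK, ∀ z' ∈ ΘK,
      ⟪expectVec N N' h Λ (fun y => Ghat N N' h μ z y)
          - expectVec N N' h Λ (fun y => Ghat N N' h μ z' y), z - z'⟫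
        ≥ (Real.exp (-(h * b)) * b * h ^ 2 * Real.exp (-(B * ((N' : ℝ) * h))))
            * ‖z - z'‖ ^ 2 := by
  classical
  intro z hz z' hz'
  set Δ : Param N N' := z - z' with hΔdef
  have hdep' : ∀ (t : ℤ) (y y' : ℤ → Bool), (∀ i < t, y i = y' i) → Λ t y = Λ t y' :=
    fun t y y' hy => hdep t y y' (fun i _ hi => hy i hi)
  have hFpos := Fpos_all (N := N) (N' := N') (B := B) hh hb hdep' hstar
  have hqpos : ∀ S ⊆ window N N', 0 < seqPMF N N' h Λ (indS S) :=
    pmf_pos (B := B) hh hb hdep' hstar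
  have hΛrange : ∀ S ⊆ window N N', ∀ s ∈ window N N',
      b ≤ Λ s (indS S) ∧ Λ s (indS S) ≤ B :=
    fun S hS s hs => hstar s hs _ (hqpos S hS)
  -- rewrite the LHS as a sum over subsets of the window
  have hL1 : ⟪expectVec N N' h Λ (fun y => Ghat N N' h μ z y)
        - expectVec N N' h Λ (fun y => Ghat N N' h μ z' y), Δ⟫
      = ∑ S ∈ (window N N').powerset, seqPMF N N' h Λ (indS S) *
          ⟪Ghat N N' h μ z (indS S) - Ghat N N' h μ z' (indS S), Δ⟫ := by
    simp only [expectVec]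
    rw [← Finset.sum_sub_distrib, sum_inner]
    rw [show (∑ w : ↥(window N N') → Bool,
          ⟪seqPMF N N' h Λ (extSeq N N' w) • Ghat N N' h μ z (extSeq N N' w)
            - seqPMF N N' h Λ (extSeq N N' w) • Ghat N N' h μ z' (extSeq N N' w), Δ⟫)
        = ∑ w : ↥(window N N') → Bool,
            (fun y => seqPMF N N' h Λ y *
              ⟪Ghat N N' h μ z y - Ghat N N' h μ z' y, Δ⟫) (extSeq N N' w) from
      Finset.sum_congr rfl (fun w _ => by rw [← smul_sub, real_inner_smul_left])]
    exact sum_ext N N' (fun y => seqPMF N N' h Λ y *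
      ⟪Ghat N N' h μ z y - Ghat N N' h μ z' y, Δ⟫)
  -- expand the inner product of the Ghat difference
  have hG : ∀ y : ℤ → Bool,
      ⟪Ghat N N' h μ z y - Ghat N N' h μ z' y, Δ⟫
      = ∑ t ∈ Finset.Icc (1 : ℤ) (N : ℤ),
          (phi (h * modelIntensity N N' μ z t y) - phi (h * modelIntensity N N' μ z' t y))
            * ⟪eta N N' t y, Δ⟫ := by
    intro y
    simp only [Ghat]
    rw [← Finset.sum_sub_distrib, sum_inner]
    apply Finset.sum_congr rfl
    intro t _
    rw [← sub_smul, real_inner_smul_left]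
    ring_nf
  have hetaΔ : ∀ t, 1 ≤ t → t ≤ (N : ℤ) → ∀ y : ℤ → Bool,
      ⟪eta N N' t y, Δ⟫
        = modelIntensity N N' μ z t y - modelIntensity N N' μ z' t y := by
    intro t h1 h2 y
    rw [eta_inner N N' h1 h2 y Δ, model_sub]
  have hterm : ∀ y : ℤ → Bool, ∀ t ∈ Finset.Icc (1 : ℤ) (N : ℤ),
      h * Real.exp (-(h * B)) * ⟪eta N N' t y, Δ⟫ ^ 2
        ≤ (phi (h * modelIntensity N N' μ z t y) - phi (h * modelIntensity N N' μ z' t y))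
            * ⟪eta N N' t y, Δ⟫ := by
    intro y t ht
    have ht' := Finset.mem_Icc.mp ht
    have hB1 := hphys z hz t ht y
    have hB2 := hphys z' hz' t ht y
    have hq := phi_quant (B := B) hh (modelIntensity N N' μ z t y)
      (modelIntensity N N' μ z' t y) hB1.2 hB2.2
    rw [hetaΔ t ht'.1 ht'.2 y]
    exact hq
  -- the sparse-event indicator bound
  have hcollapse : ∀ t, 1 ≤ t → t ≤ (N : ℤ) → ∀ S : Finset ℤ,
      ∀ i ∈ Finset.Icc (t - (N' : ℤ)) (t - 1),
      S ∩ Finset.Icc (t - (N' : ℤ)) (t - 1) = {i} →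
      ⟪eta N N' t (indS S), Δ⟫ = zent N N' Δ i t := by
    intro t h1 h2 S i him hcond
    rw [eta_inner N N' h1 h2 _ Δ]
    rw [Finset.sum_eq_single_of_mem i him]
    · have hv : indS S i = true := by
        simp only [indS, decide_eq_true_eq]
        have : i ∈ S ∩ Finset.Icc (t - (N' : ℤ)) (t - 1) := by
          rw [hcond]; exact Finset.mem_singleton_self i
        exact (Finset.mem_inter.mp this).1
      rw [hv]; simp [bval]
    · intro j hj hne
      have hv : indS S j = false := by
        simp only [indS, decide_eq_false_iff_not]
        intro hjS
        have : j ∈ S ∩ Finset.Icc (t - (N' : ℤ)) (t - 1) := Finset.mem_inter.mpr ⟨hjS, hj⟩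
        rw [hcond] at this
        exact hne (Finset.mem_singleton.mp this)
      rw [hv]; simp [bval]
  have hind : ∀ t, 1 ≤ t → t ≤ (N : ℤ) → ∀ S : Finset ℤ,
      ∑ i ∈ Finset.Icc (t - (N' : ℤ)) (t - 1),
        (if S ∩ Finset.Icc (t - (N' : ℤ)) (t - 1) = {i} then (zent N N' Δ i t) ^ 2 else 0)
      ≤ ⟪eta N N' t (indS S), Δ⟫ ^ 2 := by
    intro t h1 h2 S
    by_cases hex : ∃ i0 ∈ Finset.Icc (t - (N' : ℤ)) (t - 1),
        S ∩ Finset.Icc (t - (N' : ℤ)) (t - 1) = {i0}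
    · obtain ⟨i0, hi0m, hi0⟩ := hex
      rw [Finset.sum_eq_single_of_mem i0 hi0m]
      · rw [if_pos hi0]
        exact le_of_eq (by rw [hcollapse t h1 h2 S i0 hi0m hi0])
      · intro j hj hne
        rw [if_neg]
        intro hc
        rw [hc] at hi0
        exact hne (by simpa using hi0)
    · calc ∑ i ∈ Finset.Icc (t - (N' : ℤ)) (t - 1),
            (if S ∩ Finset.Icc (t - (N' : ℤ)) (t - 1) = {i} then (zent N N' Δ i t) ^ 2 else 0)
          = 0 := Finset.sum_eq_zero (fun i hi => if_neg (fun hc => hex ⟨i, hi, hc⟩))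
        _ ≤ _ := sq_nonneg _
  have hPb : ∀ t ∈ Finset.Icc (1 : ℤ) (N : ℤ), ∀ i ∈ Finset.Icc (t - (N' : ℤ)) (t - 1),
      h * b * Real.exp (-(h * b)) * Real.exp (-(h * B)) ^ (N' - 1)
        ≤ ∑ S ∈ (window N N').powerset, seqPMF N N' h Λ (indS S) *
            (if S ∩ Finset.Icc (t - (N' : ℤ)) (t - 1) = {i} then (1 : ℝ) else 0) := by
    intro t ht i hi
    have ht' := Finset.mem_Icc.mp ht
    have hi' := Finset.mem_Icc.mp hi
    exact Pbound hN' hh hb hbB hdep' hFpos hΛrange t i ht'.1 ht'.2 hi'.1 hi'.2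
  have hswap : ∑ S ∈ (window N N').powerset, seqPMF N N' h Λ (indS S) *
        ∑ t ∈ Finset.Icc (1 : ℤ) (N : ℤ), ∑ i ∈ Finset.Icc (t - (N' : ℤ)) (t - 1),
          (if S ∩ Finset.Icc (t - (N' : ℤ)) (t - 1) = {i} then (zent N N' Δ i t) ^ 2 else 0)
      = ∑ t ∈ Finset.Icc (1 : ℤ) (N : ℤ), ∑ i ∈ Finset.Icc (t - (N' : ℤ)) (t - 1),
          (zent N N' Δ i t) ^ 2 * ∑ S ∈ (window N N').powerset, seqPMF N N' h Λ (indS S) *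
            (if S ∩ Finset.Icc (t - (N' : ℤ)) (t - 1) = {i} then (1 : ℝ) else 0) := by
    calc ∑ S ∈ (window N N').powerset, seqPMF N N' h Λ (indS S) *
            ∑ t ∈ Finset.Icc (1 : ℤ) (N : ℤ), ∑ i ∈ Finset.Icc (t - (N' : ℤ)) (t - 1),
              (if S ∩ Finset.Icc (t - (N' : ℤ)) (t - 1) = {i} then (zent N N' Δ i t) ^ 2 else 0)
        = ∑ S ∈ (window N N').powerset, ∑ t ∈ Finset.Icc (1 : ℤ) (N : ℤ),
            ∑ i ∈ Finset.Icc (t - (N' : ℤ)) (t - 1), seqPMF N N' h Λ (indS S) *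
              (if S ∩ Finset.Icc (t - (N' : ℤ)) (t - 1) = {i} then (zent N N' Δ i t) ^ 2 else 0) := by
          apply Finset.sum_congr rfl
          intro S _
          rw [Finset.mul_sum]
          exact Finset.sum_congr rfl (fun t _ => Finset.mul_sum _ _ _)
      _ = ∑ t ∈ Finset.Icc (1 : ℤ) (N : ℤ), ∑ S ∈ (window N N').powerset,
            ∑ i ∈ Finset.Icc (t - (N' : ℤ)) (t - 1), seqPMF N N' h Λ (indS S) *
              (if S ∩ Finset.Icc (t - (N' : ℤ)) (t - 1) = {i} then (zent N N' Δ i t) ^ 2 else 0) :=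
          Finset.sum_comm
      _ = ∑ t ∈ Finset.Icc (1 : ℤ) (N : ℤ), ∑ i ∈ Finset.Icc (t - (N' : ℤ)) (t - 1),
            ∑ S ∈ (window N N').powerset, seqPMF N N' h Λ (indS S) *
              (if S ∩ Finset.Icc (t - (N' : ℤ)) (t - 1) = {i} then (zent N N' Δ i t) ^ 2 else 0) :=
          Finset.sum_congr rfl (fun t _ => Finset.sum_comm)
      _ = ∑ t ∈ Finset.Icc (1 : ℤ) (N : ℤ), ∑ i ∈ Finset.Icc (t - (N' : ℤ)) (t - 1),
            (zent N N' Δ i t) ^ 2 * ∑ S ∈ (window N N').powerset, seqPMF N N' h Λ (indS S) *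
              (if S ∩ Finset.Icc (t - (N' : ℤ)) (t - 1) = {i} then (1 : ℝ) else 0) := by
          apply Finset.sum_congr rfl
          intro t _
          apply Finset.sum_congr rfl
          intro i _
          rw [Finset.mul_sum]
          apply Finset.sum_congr rfl
          intro S _
          by_cases hc : S ∩ Finset.Icc (t - (N' : ℤ)) (t - 1) = {i}
          · simp only [if_pos hc]; ring
          · simp only [if_neg hc]; ring
  -- constant bookkeeping
  have hpow : Real.exp (-(h * B)) * Real.exp (-(h * B)) ^ (N' - 1)
      = Real.exp (-(B * ((N' : ℝ) * h))) := by
    rw [← pow_succ']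
    rw [show N' - 1 + 1 = N' from by omega]
    rw [← Real.exp_nat_mul]
    congr 1
    ring
  have hconst : Real.exp (-(h * b)) * b * h ^ 2 * Real.exp (-(B * ((N' : ℝ) * h)))
      = (h * Real.exp (-(h * B))) *
          (h * b * Real.exp (-(h * b)) * Real.exp (-(h * B)) ^ (N' - 1)) := by
    rw [← hpow]; ring
  rw [hL1, ge_iff_le]
  calc Real.exp (-(h * b)) * b * h ^ 2 * Real.exp (-(B * ((N' : ℝ) * h))) * ‖Δ‖ ^ 2
      = (h * Real.exp (-(h * B))) *
          ∑ t ∈ Finset.Icc (1 : ℤ) (N : ℤ), ∑ i ∈ Finset.Icc (t - (N' : ℤ)) (t - 1),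
            (zent N N' Δ i t) ^ 2 *
              (h * b * Real.exp (-(h * b)) * Real.exp (-(h * B)) ^ (N' - 1)) := by
        rw [norm_sq_eq, hconst, Finset.mul_sum, Finset.mul_sum]
        apply Finset.sum_congr rfl
        intro t _
        rw [Finset.mul_sum, Finset.mul_sum]
        apply Finset.sum_congr rfl
        intro i _
        ring
    _ ≤ (h * Real.exp (-(h * B))) *
          ∑ t ∈ Finset.Icc (1 : ℤ) (N : ℤ), ∑ i ∈ Finset.Icc (t - (N' : ℤ)) (t - 1),
            (zent N N' Δ i t) ^ 2 * ∑ S ∈ (window N N').powerset, seqPMF N N' h Λ (indS S) *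
              (if S ∩ Finset.Icc (t - (N' : ℤ)) (t - 1) = {i} then (1 : ℝ) else 0) := by
        apply mul_le_mul_of_nonneg_left _ (by positivity)
        apply Finset.sum_le_sum
        intro t ht
        apply Finset.sum_le_sum
        intro i hi
        exact mul_le_mul_of_nonneg_left (hPb t ht i hi) (sq_nonneg _)
    _ = (h * Real.exp (-(h * B))) *
          ∑ S ∈ (window N N').powerset, seqPMF N N' h Λ (indS S) *
            ∑ t ∈ Finset.Icc (1 : ℤ) (N : ℤ), ∑ i ∈ Finset.Icc (t - (N' : ℤ)) (t - 1),
              (if S ∩ Finset.Icc (t - (N' : ℤ)) (t - 1) = {i}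
                then (zent N N' Δ i t) ^ 2 else 0) := by
        rw [hswap]
    _ ≤ (h * Real.exp (-(h * B))) *
          ∑ S ∈ (window N N').powerset, seqPMF N N' h Λ (indS S) *
            ∑ t ∈ Finset.Icc (1 : ℤ) (N : ℤ), ⟪eta N N' t (indS S), Δ⟫ ^ 2 := by
        apply mul_le_mul_of_nonneg_left _ (by positivity)
        apply Finset.sum_le_sum
        intro S hS
        apply mul_le_mul_of_nonneg_left _ (hqpos S (Finset.mem_powerset.mp hS)).le
        apply Finset.sum_le_sum
        intro t ht
        have ht' := Finset.mem_Icc.mp ht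
        exact hind t ht'.1 ht'.2 S
    _ = ∑ S ∈ (window N N').powerset, seqPMF N N' h Λ (indS S) *
          ∑ t ∈ Finset.Icc (1 : ℤ) (N : ℤ),
            (h * Real.exp (-(h * B))) * ⟪eta N N' t (indS S), Δ⟫ ^ 2 := by
        rw [Finset.mul_sum]
        apply Finset.sum_congr rfl
        intro S _
        rw [← Finset.mul_sum]
        ring
    _ ≤ ∑ S ∈ (window N N').powerset, seqPMF N N' h Λ (indS S) *
          ∑ t ∈ Finset.Icc (1 : ℤ) (N : ℤ),
            (phi (h * modelIntensity N N' μ z t (indS S))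
              - phi (h * modelIntensity N N' μ z' t (indS S)))
              * ⟪eta N N' t (indS S), Δ⟫ := by
        apply Finset.sum_le_sum
        intro S hS
        apply mul_le_mul_of_nonneg_left _ (hqpos S (Finset.mem_powerset.mp hS)).le
        apply Finset.sum_le_sum
        intro t ht
        exact hterm (indS S) t ht
    _ = ∑ S ∈ (window N N').powerset, seqPMF N N' h Λ (indS S) *
          ⟪Ghat N N' h μ z (indS S) - Ghat N N' h μ z' (indS S), Δ⟫ := by
        apply Finset.sum_congr rfl
        intro S _
        rw [hG]
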